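/- For fixed 0 ≤ x_a, the map x_b ↦ (x_b·tanh(x_b/2) - x_a·tanh(x_a/2))/(x_b² - x_a²) is strictly decreasing in x_b for x_b > x_a ≥ 0. -/

import Mathlib

open Real

private lemma tanh_hasDerivAt (x : ℝ) :
    HasDerivAt Real.tanh (1 / Real.cosh x ^ 2) x := by
  have h : Real.tanh = fun y => Real.sinh y / Real.cosh y := by
    funext y; exact Real.tanh_eq_sinh_div_cosh y
  rw [h]
  have := (Real.hasDerivAt_sinh x).div (Real.hasDerivAt_cosh x) (Real.cosh_pos x).ne'
  refine this.congr_deriv ?_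
  have h1 : Real.cosh x ^ 2 - Real.sinh x ^ 2 = 1 := Real.cosh_sq_sub_sinh_sq x
  field_simp
  nlinarith [Real.cosh_pos x]

private lemma continuous_tanh : Continuous Real.tanh := by
  have h : Real.tanh = fun y => Real.sinh y / Real.cosh y := by
    funext y; exact Real.tanh_eq_sinh_div_cosh y
  rw [h]
  exact Real.continuous_sinh.div Real.continuous_cosh fun x => (Real.cosh_pos x).ne'

/-- `tanh u / u` is strictly decreasing on `(0, ∞)`. -/
private lemma tanh_div_strictAnti :
    StrictAntiOn (fun u : ℝ => Real.tanh u / u) (Set.Ioi 0) := by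
  apply strictAntiOn_of_deriv_neg (convex_Ioi 0)
  · exact ContinuousOn.div continuous_tanh.continuousOn continuousOn_id
      fun x hx => ne_of_gt hx
  · intro x hx
    rw [interior_Ioi] at hx
    have hx0 : (0:ℝ) < x := hx
    have hd : HasDerivAt (fun u : ℝ => Real.tanh u / u)
        ((1 / Real.cosh x ^ 2 * x - Real.tanh x * 1) / x ^ 2) x :=
      (tanh_hasDerivAt x).div (hasDerivAt_id x) hx0.ne'
    rw [hd.deriv]
    apply div_neg_of_neg_of_pos _ (by positivity)
    have hc := Real.cosh_pos x
    have h1 : (1:ℝ) ≤ Real.cosh x := Real.one_le_cosh x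
    have hs : x < Real.sinh x := Real.self_lt_sinh_iff.mpr hx0
    have ht : Real.tanh x * Real.cosh x ^ 2 = Real.sinh x * Real.cosh x := by
      rw [Real.tanh_eq_sinh_div_cosh]; field_simp
    have key : x < Real.tanh x * Real.cosh x ^ 2 := by
      rw [ht]; nlinarith [Real.sinh_pos_iff.mpr hx0]
    have : 1 / Real.cosh x ^ 2 * x < Real.tanh x := by
      rw [div_mul_eq_mul_div, one_mul, div_lt_iff₀ (by positivity)]
      exact key
    linarith

private noncomputable def gfun : ℝ → ℝ :=
  fun t => Real.sqrt t * Real.tanh (Real.sqrt t / 2)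

private noncomputable def phi : ℝ → ℝ :=
  fun u => Real.tanh (u / 2) / (2 * u) + 1 / (4 * Real.cosh (u / 2) ^ 2)

private lemma phi_strictAnti : StrictAntiOn phi (Set.Ioi 0) := by
  intro u hu v hv huv
  have hu0 : (0:ℝ) < u := hu
  have hv0 : (0:ℝ) < v := hv
  have h1 : Real.tanh (v / 2) / (2 * v) < Real.tanh (u / 2) / (2 * u) := by
    have := tanh_div_strictAnti (Set.mem_Ioi.mpr (by linarith : (0:ℝ) < u / 2))
      (Set.mem_Ioi.mpr (by linarith : (0:ℝ) < v / 2)) (by linarith)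
    simp only at this
    have eu : Real.tanh (u / 2) / (u / 2) = 4 * (Real.tanh (u / 2) / (2 * u)) := by
      field_simp; ring
    have ev : Real.tanh (v / 2) / (v / 2) = 4 * (Real.tanh (v / 2) / (2 * v)) := by
      field_simp; ring
    rw [eu, ev] at this
    linarith
  have h2 : 1 / (4 * Real.cosh (v / 2) ^ 2) < 1 / (4 * Real.cosh (u / 2) ^ 2) := by
    have hcu : Real.cosh (u / 2) < Real.cosh (v / 2) := by
      rw [Real.cosh_lt_cosh]
      rw [abs_of_pos (by linarith), abs_of_pos (by linarith)]
      linarith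
    have hcup := Real.cosh_pos (u / 2)
    apply one_div_lt_one_div_of_lt (by positivity)
    nlinarith
  simp only [phi]
  linarith

private lemma gfun_hasDerivAt {t : ℝ} (ht : 0 < t) :
    HasDerivAt gfun (phi (Real.sqrt t)) t := by
  have hst : (0:ℝ) < Real.sqrt t := Real.sqrt_pos.mpr ht
  have hs : HasDerivAt Real.sqrt (1 / (2 * Real.sqrt t)) t :=
    Real.hasDerivAt_sqrt ht.ne'
  have hs2 : HasDerivAt (fun t => Real.sqrt t / 2) (1 / (2 * Real.sqrt t) / 2) t :=
    hs.div_const 2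
  have hth : HasDerivAt (fun t => Real.tanh (Real.sqrt t / 2))
      (1 / Real.cosh (Real.sqrt t / 2) ^ 2 * (1 / (2 * Real.sqrt t) / 2)) t :=
    (tanh_hasDerivAt (Real.sqrt t / 2)).comp (h₂ := Real.tanh) t hs2
  have h := hs.mul hth
  refine h.congr_deriv ?_
  have hc := Real.cosh_pos (Real.sqrt t / 2)
  simp only [phi]
  field_simp
  ring

private lemma gfun_strictConcave : StrictConcaveOn ℝ (Set.Ici 0) gfun := by
  apply StrictAntiOn.strictConcaveOn_of_deriv (convex_Ici 0)
  · exact (Real.continuous_sqrt.mul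
      (continuous_tanh.comp (Real.continuous_sqrt.div_const 2))).continuousOn
  · rw [interior_Ici]
    intro s hs t ht hst
    have hs0 : (0:ℝ) < s := hs
    have ht0 : (0:ℝ) < t := ht
    rw [(gfun_hasDerivAt hs0).deriv, (gfun_hasDerivAt ht0).deriv]
    exact phi_strictAnti (Set.mem_Ioi.mpr (Real.sqrt_pos.mpr hs0))
      (Set.mem_Ioi.mpr (Real.sqrt_pos.mpr ht0))
      ((Real.sqrt_lt_sqrt hs0.le hst))

/-- For fixed `x_a ≥ 0`, the map
`x_b ↦ (x_b tanh(x_b/2) - x_a tanh(x_a/2)) / (x_b² - x_a²)`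
is strictly decreasing in `x_b` on `(x_a, ∞)`. -/
theorem difference_quotient_strictAntiOn (xa : ℝ) (hxa : 0 ≤ xa) :
    StrictAntiOn
      (fun xb : ℝ =>
        (xb * Real.tanh (xb / 2) - xa * Real.tanh (xa / 2)) / (xb ^ 2 - xa ^ 2))
      (Set.Ioi xa) := by
  intro b hb c hc hbc
  have hb0 : 0 < b := lt_of_le_of_lt hxa hb
  have hc0 : 0 < c := lt_of_le_of_lt hxa hc
  have hab : xa ^ 2 < b ^ 2 := by nlinarith [Set.mem_Ioi.mp hb]
  have hac : xa ^ 2 < c ^ 2 := by nlinarith [Set.mem_Ioi.mp hc]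
  have hbc2 : b ^ 2 < c ^ 2 := by nlinarith
  have key := gfun_strictConcave.secant_strict_mono
    (a := xa ^ 2) (x := b ^ 2) (y := c ^ 2)
    (Set.mem_Ici.mpr (by positivity)) (Set.mem_Ici.mpr (by positivity))
    (Set.mem_Ici.mpr (by positivity)) hab.ne' hac.ne' hbc2
  have ega : gfun (xa ^ 2) = xa * Real.tanh (xa / 2) := by
    simp [gfun, Real.sqrt_sq hxa]
  have egb : gfun (b ^ 2) = b * Real.tanh (b / 2) := by
    simp [gfun, Real.sqrt_sq hb0.le]
  have egc : gfun (c ^ 2) = c * Real.tanh (c / 2) := by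
    simp [gfun, Real.sqrt_sq hc0.le]
  rw [ega, egb, egc] at key
  simpa using key
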